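/- Let h be a multisegment and n a nonempty multisegment admissible to h, and let a be the smallest integer with n[a] ≠ ∅. If there exist a segment Δ in n[a] and a segment Δ̄ in n[a+1] such that Δ̄ ⊄ Δ and Δ̄ ⊆ Υ(Δ,h), then (n,h) is locally minimizable. -/

import Mathlib

noncomputable section
open Classical

/-- A segment `[a,b]`: a pair of integers with `a ≤ b`, identified with the
integer interval `{a, a+1, …, b}`. -/
def Seg : Type := {p : ℤ × ℤ // p.1 ≤ p.2}

/-- Constructor for segments. -/
def Seg.mk (a b : ℤ) (hab : a ≤ b) : Seg := Subtype.mk (a, b) hab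

instance : DecidableEq Seg := inferInstanceAs (DecidableEq {p : ℤ × ℤ // p.1 ≤ p.2})

instance : Inhabited Seg := ⟨Seg.mk 0 0 le_rfl⟩

/-- The lexicographic ordering `≼ᴸ` on segments: `[a,b] ≤ [a',b']` iff `a < a'`,
or `a = a'` and `b ≤ b'`. -/
instance : LinearOrder Seg :=
  LinearOrder.lift' (fun Δ => toLex (Subtype.val Δ))
    (fun _ _ hh => Subtype.ext (toLex.injective hh))

/-- `a(Δ)`, the left endpoint. -/
def segA (Δ : Seg) : ℤ := (Subtype.val Δ).1

/-- `b(Δ)`, the right endpoint. -/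
def segB (Δ : Seg) : ℤ := (Subtype.val Δ).2

/-- `[a,b]` as a multiset of segments: a singleton if `a ≤ b`, empty otherwise
("empty segments are discarded"). -/
def mkSeg? (a b : ℤ) : Multiset Seg := if h : a ≤ b then {Seg.mk a b h} else 0

/-- `⁻Δ = [a+1,b]`, as a multiset (the empty segment being discarded). -/
def negSeg (Δ : Seg) : Multiset Seg := mkSeg? (segA Δ + 1) (segB Δ)

/-- `⁻m` for a multisegment `m`. -/
def negM (m : Multiset Seg) : Multiset Seg := m.bind negSeg

/-- `m[c]`: the submultiset of segments of `m` starting at `c`. -/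
def atc (m : Multiset Seg) (c : ℤ) : Multiset Seg := m.filter (fun Δ => segA Δ = c)

/-- `Δ ⊆ Δ'` as intervals. -/
def Subseg (Δ Δ' : Seg) : Prop := segA Δ' ≤ segA Δ ∧ segB Δ ≤ segB Δ'

/-- Two segments are linked: their union is an interval and neither contains
the other. -/
def Linked (Δ Δ' : Seg) : Prop :=
  segA Δ ≤ segB Δ' + 1 ∧ segA Δ' ≤ segB Δ + 1 ∧ ¬ Subseg Δ Δ' ∧ ¬ Subseg Δ' Δ

/-- `Δ = [a,b]` is admissible to `h`: `h` contains a segment `[a,c]` with `c ≥ b`. -/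
def SegAdmissible (Δ : Seg) (h : Multiset Seg) : Prop :=
  ∃ D ∈ h, segA D = segA Δ ∧ segB Δ ≤ segB D

/-- The tail of the removal sequence: recursively pick the `≺ᴸ`-minimal segment
`[aᵢ,bᵢ]` of `h` with `a_{i-1} < aᵢ` and `b ≤ bᵢ < b_{i-1}`. -/
def removalTail (h : Multiset Seg) (b : ℤ) : ℕ → ℤ → ℤ → List Seg
  | 0, _, _ => []
  | fuel + 1, aprev, bprev =>
    if hx : ∃ D, (D ∈ h ∧ aprev < segA D ∧ b ≤ segB D ∧ segB D < bprev) ∧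
        ∀ D', (D' ∈ h ∧ aprev < segA D' ∧ b ≤ segB D' ∧ segB D' < bprev) → D ≤ D' then
      Classical.choose hx ::
        removalTail h b fuel (segA (Classical.choose hx)) (segB (Classical.choose hx))
    else []

/-- The removal sequence for `(Δ, h)`: `Δ₁` is a shortest segment `[a,c]` of `h`
with `c ≥ b`, followed by the recursively chosen segments. (Empty if `Δ` is not
admissible to `h`.) -/
def removalSeq (Δ : Seg) (h : Multiset Seg) : List Seg :=
  if hx : ∃ D, (D ∈ h ∧ segA D = segA Δ ∧ segB Δ ≤ segB D) ∧
      ∀ D', (D' ∈ h ∧ segA D' = segA Δ ∧ segB Δ ≤ segB D') → segB D ≤ segB D' then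
    Classical.choose hx ::
      removalTail h (segB Δ) (segB (Classical.choose hx) - segB Δ).toNat
        (segA (Classical.choose hx)) (segB (Classical.choose hx))
  else []

/-- `Υ(Δ,h)`: the first segment of the removal sequence for `(Δ,h)`. -/
def Upsilon (Δ : Seg) (h : Multiset Seg) : Seg := (removalSeq Δ h).headD default

/-- The truncations `Δ₁ᵗʳ, …, Δᵣᵗʳ` of a removal sequence:
`Δᵢᵗʳ = [a_{i+1}, bᵢ]` for `i < r` and `Δᵣᵗʳ = [b+1, bᵣ]` (possibly empty). -/
def truncList (b : ℤ) : List Seg → Multiset Seg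
  | [] => 0
  | [D] => mkSeg? (b + 1) (segB D)
  | D :: D' :: rest => mkSeg? (segA D') (segB D) + truncList b (D' :: rest)

/-- `r(Δ,h) = h − Δ₁ − … − Δᵣ + Δ₁ᵗʳ + … + Δᵣᵗʳ`, with `none` playing the role
of the infinity multisegment `∞`. -/
def segRemove (Δ : Seg) (h : Multiset Seg) : Option (Multiset Seg) :=
  if SegAdmissible Δ h then
    some (h - (removalSeq Δ h : Multiset Seg) + truncList (segB Δ) (removalSeq Δ h))
  else none

/-- Iterated removal along a list of segments (also `r(Δ,∞) = ∞`). -/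
def rList : List Seg → Option (Multiset Seg) → Option (Multiset Seg)
  | [], o => o
  | Δ :: rest, o => rList rest (o.bind (fun x => segRemove Δ x))

/-- `r(m,h)` for a multisegment `m`: apply the removals along the segments of
`m` listed in an ascending (here: `≺ᴸ`-sorted) order. -/
def rM (m h : Multiset Seg) : Option (Multiset Seg) :=
  rList (m.sort (· ≤ ·)) (some h)

/-- The smallest integer `a` with `n[a] ≠ ∅` (junk value `0` for `n = ∅`). -/
def minStart (n : Multiset Seg) : ℤ := ((n.map segA).sort (· ≤ ·)).headD 0

/-- `Υ(Δ₁,r₀), Υ(Δ₂,r₁), …` computed sequentially along a list of segments. -/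
def fsList : List Seg → Multiset Seg → Multiset Seg
  | [], _ => 0
  | Δ :: rest, h =>
    Upsilon Δ h ::ₘ
      (match segRemove Δ h with
        | some h' => fsList rest h'
        | none => 0)

/-- `fs(n,h)`: with `a` the smallest integer such that `n[a] ≠ ∅` and
`n[a] = {Δ₁, …, Δₖ}`, this is `{Υ(Δ₁,r₀), …, Υ(Δₖ,r_{k-1})}` if `n[a]` is
admissible to `h`, and `∅` otherwise (also `fs(∅,h) = ∅`). -/
def fs (n h : Multiset Seg) : Multiset Seg :=
  if n = 0 then 0
  else if rM (atc n (minStart n)) h ≠ none then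
    fsList ((atc n (minStart n)).sort (· ≤ ·)) h
  else 0

/-- `trr(n,h) = h − fs(n,h) + ⁻(fs(n,h))`. -/
def trr (n h : Multiset Seg) : Multiset Seg := h - fs n h + negM (fs n h)

/-- `trd(n,h) = n − n[a] + ⁻(n[a])` where `a` is the smallest integer with
`n[a] ≠ ∅` (and `trd(∅,h) = ∅`). -/
def trd (n h : Multiset Seg) : Multiset Seg :=
  if n = 0 then 0 else n - atc n (minStart n) + negM (atc n (minStart n))

/-- The pairs `(nᵢ, hᵢ)` of the fine chain: `n₀ = n`, `h₀ = h`,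
`nᵢ = trd(n_{i-1}, h_{i-1})`, `hᵢ = trr(n_{i-1}, h_{i-1})`. -/
def fcPair (n h : Multiset Seg) : ℕ → Multiset Seg × Multiset Seg
  | 0 => (n, h)
  | i + 1 => (trd (fcPair n h i).1 (fcPair n h i).2, trr (fcPair n h i).1 (fcPair n h i).2)

/-- The fine chain `fc_h(n)`: the sequence `fs(n₀,h₀), fs(n₁,h₁), …`. -/
def fc (h n : Multiset Seg) (i : ℕ) : Multiset Seg := fs (fcPair n h i).1 (fcPair n h i).2

/-- `n` is obtained from `m` by an elementary intersection-union operation: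
`n = m − Δ − Δ' + (Δ ∪ Δ') + (Δ ∩ Δ')` for a pair of linked segments `Δ, Δ'`
of `m` (intersection omitted if empty). -/
def elemIU (m n : Multiset Seg) : Prop :=
  ∃ Δ Δ', Δ ∈ m ∧ Δ' ∈ m.erase Δ ∧ Linked Δ Δ' ∧
    n = (m.erase Δ).erase Δ'
        + mkSeg? (min (segA Δ) (segA Δ')) (max (segB Δ) (segB Δ'))
        + mkSeg? (max (segA Δ) (segA Δ')) (min (segB Δ) (segB Δ'))

/-- The Zelevinsky ordering: `n ≤_Z m` iff `n = m` or `n` is obtained from `m`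
by a finite sequence of elementary intersection-union operations. -/
def leZ (n m : Multiset Seg) : Prop := Relation.ReflTransGen elemIU m n

/-- The cuspidal support of a multisegment: the multiset union of its segments,
as a multiset of integers. -/
def csupp (m : Multiset Seg) : Multiset ℤ :=
  m.bind (fun Δ => (Finset.Icc (segA Δ) (segB Δ)).val)

/-- The `b`-values of a multisegment, sorted in descending order. -/
def bDesc (m : Multiset Seg) : List ℤ := ((m.map segB).sort (· ≤ ·)).reverse

/-- `m₁ ≤ᵃ_c m₂` for multisegments at a point `c`: with segments labelled
`Δ_{1,k} ≤ᵃ_c … ≤ᵃ_c Δ_{1,1}` and `Δ_{2,r} ≤ᵃ_c … ≤ᵃ_c Δ_{2,1}`, require `k ≤ r`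
and `Δ_{1,i} ≤ᵃ_c Δ_{2,i}` for all `i ≤ k`. -/
def leA (m₁ m₂ : Multiset Seg) : Prop :=
  (bDesc m₁).length ≤ (bDesc m₂).length ∧
    ∀ i < (bDesc m₁).length, (bDesc m₁).getD i 0 ≤ (bDesc m₂).getD i 0

/-- `m₁ <ᵃ_c m₂`. -/
def ltA (m₁ m₂ : Multiset Seg) : Prop := leA m₁ m₂ ∧ m₁ ≠ m₂

/-- The fine chain ordering `n <^{fc} n'` (with respect to `h`). -/
def ltFC (h n n' : Multiset Seg) : Prop :=
  ∃ i, (∀ j < i, fc h n j = fc h n' j) ∧ ltA (fc h n i) (fc h n' i)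

/-- `n ≤^{fc} n'`: either `n <^{fc} n'` or the two fine chains are equal. -/
def leFC (h n n' : Multiset Seg) : Prop := ltFC h n n' ∨ ∀ i, fc h n i = fc h n' i

/-- Local minimizability of `(n,h)`: with `a` the smallest integer such that
`n[a] ≠ ∅`, there is a segment `Δ̄` in `n[a+1]` with
`|{Δ ∈ n[a] : Δ̄ ⊆ Δ}| < |{Δ ∈ fs(n,h) : Δ̄ ⊆ Δ}|`. -/
def locallyMin (n h : Multiset Seg) : Prop :=
  ∃ Δb ∈ atc n (minStart n + 1),
    ((atc n (minStart n)).filter (fun Δ => Subseg Δb Δ)).card <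
      ((fs n h).filter (fun Δ => Subseg Δb Δ)).card

/-- The shortest segment of the removal sequence for `(Δ,h)` whose interval
contains `x` (by the nesting property, the last such one in the sequence). -/
def shortestCont (Δ : Seg) (h : Multiset Seg) (x : ℤ) : Seg :=
  (((removalSeq Δ h).filter (fun D => decide (segA D ≤ x ∧ x ≤ segB D))).getLast?).getD default

/-- The non-overlapping property for `(Δ, Δ', h)`: for the shortest segment `Δ̄`
in the removal sequence for `(Δ,h)` containing `a(Δ') − 1`, one has `Δ' ⊄ Δ̄`. -/
def NonOverlap (Δ Δ' : Seg) (h : Multiset Seg) : Prop :=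
  ¬ Subseg Δ' (shortestCont Δ h (segA Δ' - 1))

/-- `ε_Δ(h) = |{Δ̃ ∈ h[a(Δ)] : Δ ⊆ Δ̃}|`, counted with multiplicity. -/
def epsilonSeg (Δ : Seg) (h : Multiset Seg) : ℕ :=
  ((atc h (segA Δ)).filter (fun D => Subseg Δ D)).card

/-- `η_{Δ'}(h) = η_{Δ'}(h')`: componentwise equality of
`(ε_{[a',b']}, ε_{[a'+1,b']}, …, ε_{[b',b']})`. -/
def etaEq (Δ' : Seg) (h h' : Multiset Seg) : Prop :=
  ∀ c, segA Δ' ≤ c → ∀ hc : c ≤ segB Δ',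
    epsilonSeg (Seg.mk c (segB Δ') hc) h = epsilonSeg (Seg.mk c (segB Δ') hc) h'

/-- The intermediate segment property for `(Δ, Δ', h)`. -/
def IntermediateSeg (Δ Δ' : Seg) (h : Multiset Seg) : Prop :=
  ∃ D ∈ h, segA Δ ≤ segA D ∧ segA D < segA Δ' ∧ segB Δ ≤ segB D ∧ segB D < segB Δ'

/-- Helper to build segments from literals. -/
def sg (a b : ℤ) (hab : a ≤ b := by decide) : Seg := Seg.mk a b hab

lemma seg_le_iff (D E : Seg) : D ≤ E ↔ segA D < segA E ∨ (segA D = segA E ∧ segB D ≤ segB E) := by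
  show toLex D.val ≤ toLex E.val ↔ _
  rw [Prod.Lex.le_iff]
  rfl

lemma seg_ab (D : Seg) : segA D ≤ segB D := D.2

lemma mem_mkSeg? {E : Seg} {x y : ℤ} (h : E ∈ mkSeg? x y) : segA E = x := by
  unfold mkSeg? at h
  split at h
  · simp only [Multiset.mem_singleton] at h; subst h; rfl
  · simp at h

lemma exists_min_b {Δ : Seg} {h : Multiset Seg} (ha : SegAdmissible Δ h) :
    ∃ D, (D ∈ h ∧ segA D = segA Δ ∧ segB Δ ≤ segB D) ∧
      ∀ D', (D' ∈ h ∧ segA D' = segA Δ ∧ segB Δ ≤ segB D') → segB D ≤ segB D' := by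
  classical
  set s : Multiset Seg := h.filter (fun D => segA D = segA Δ ∧ segB Δ ≤ segB D) with hs
  obtain ⟨D0, hD0, hD0a, hD0b⟩ := ha
  have hD0s : D0 ∈ s := by rw [hs, Multiset.mem_filter]; exact ⟨hD0, hD0a, hD0b⟩
  have hne : (s.toFinset.image segB).Nonempty := ⟨segB D0, Finset.mem_image_of_mem _ (Multiset.mem_toFinset.2 hD0s)⟩
  obtain ⟨D, hDs, hDb⟩ := Finset.mem_image.1 (Finset.min'_mem _ hne)
  rw [Multiset.mem_toFinset, hs, Multiset.mem_filter] at hDs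
  refine ⟨D, ⟨hDs.1, hDs.2⟩, ?_⟩
  rintro D' ⟨hD', hD'a, hD'b⟩
  have : segB D' ∈ s.toFinset.image segB := by
    exact Finset.mem_image_of_mem _ (Multiset.mem_toFinset.2 (by rw [hs, Multiset.mem_filter]; exact ⟨hD', hD'a, hD'b⟩))
  rw [hDb]
  exact Finset.min'_le _ _ this

lemma upsilon_spec {Δ : Seg} {h : Multiset Seg} (ha : SegAdmissible Δ h) :
    Upsilon Δ h ∈ h ∧ segA (Upsilon Δ h) = segA Δ ∧ segB Δ ≤ segB (Upsilon Δ h) ∧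
      ∀ D', D' ∈ h → segA D' = segA Δ → segB Δ ≤ segB D' → segB (Upsilon Δ h) ≤ segB D' := by
  have hx : ∃ D, (D ∈ h ∧ segA D = segA Δ ∧ segB Δ ≤ segB D) ∧
      ∀ D', (D' ∈ h ∧ segA D' = segA Δ ∧ segB Δ ≤ segB D') → segB D ≤ segB D' := exists_min_b ha
  have hu : Upsilon Δ h = Classical.choose hx := by
    unfold Upsilon removalSeq
    rw [dif_pos hx]
    rfl
  have hsp := Classical.choose_spec hx
  rw [hu]
  exact ⟨hsp.1.1, hsp.1.2.1, hsp.1.2.2, fun D' h1 h2 h3 => hsp.2 D' ⟨h1, h2, h3⟩⟩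

lemma removalTail_segA (h : Multiset Seg) (b : ℤ) :
    ∀ (fuel : ℕ) (aprev bprev : ℤ), ∀ D ∈ removalTail h b fuel aprev bprev, aprev < segA D := by
  intro fuel
  induction fuel with
  | zero => intro aprev bprev D hD; simp [removalTail] at hD
  | succ k ih =>
    intro aprev bprev D hD
    unfold removalTail at hD
    split at hD
    · rename_i hx
      have hsp := Classical.choose_spec hx
      rcases List.mem_cons.1 hD with rfl | hD
      · exact hsp.1.2.1
      · exact lt_trans hsp.1.2.1 (ih _ _ D hD)
    · simp at hD

lemma truncList_segA :
    ∀ (L : List Seg) (b a0 : ℤ), a0 ≤ b → (∀ D ∈ L.tail, a0 < segA D) →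
      ∀ E ∈ truncList b L, a0 < segA E := by
  intro L
  induction L with
  | nil => intro b a0 _ _ E hE; simp [truncList] at hE
  | cons D rest ih =>
    intro b a0 hab htl E hE
    cases rest with
    | nil =>
      have : segA E = b + 1 := mem_mkSeg? (by simpa [truncList] using hE)
      omega
    | cons D' rest' =>
      rw [truncList, Multiset.mem_add] at hE
      rcases hE with hE | hE
      · have : segA E = segA D' := mem_mkSeg? hE
        rw [this]; exact htl D' (List.mem_cons_self)
      · exact ih b a0 hab (fun D hD => htl D (List.mem_cons_of_mem _ hD)) E hE

lemma segRemove_preserve {D : Seg} {h' h'' : Multiset Seg} (hd : segRemove D h' = some h'') :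
    ∀ E ∈ h'', segA E ≤ segA D → E ∈ h' := by
  intro E hE hEa
  unfold segRemove at hd
  split at hd
  · rename_i hadm
    rw [Option.some_inj] at hd
    subst hd
    rw [Multiset.mem_add] at hE
    rcases hE with hE | hE
    · exact Multiset.mem_of_le (Multiset.sub_le_self _ _) hE
    · exfalso
      have htail : ∀ F ∈ (removalSeq D h').tail, segA D < segA F := by
        unfold removalSeq
        split
        · rename_i hx
          intro F hF
          have hsp := Classical.choose_spec hx
          have := removalTail_segA h' (segB D) _ _ _ F hF
          rw [hsp.1.2.1] at this
          exact this
        · intro F hF; simp at hF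
      have := truncList_segA (removalSeq D h') (segB D) (segA D) (seg_ab D) htail E hE
      omega
  · exact absurd hd (by simp)

lemma rList_none : ∀ (l : List Seg), rList l none = none := by
  intro l; induction l with
  | nil => rfl
  | cons x l ih => simpa [rList] using ih

lemma rList_cons_ne {x : Seg} {l : List Seg} {h : Multiset Seg}
    (hne : rList (x :: l) (some h) ≠ none) :
    ∃ h'', segRemove x h = some h'' ∧ rList l (some h'') ≠ none := by
  rw [rList] at hne
  cases hx : segRemove x h with
  | none => exfalso; apply hne; show rList l ((some h).bind (segRemove x)) = none; rw [Option.bind_some, hx]; exact rList_none l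
  | some h'' =>
    refine ⟨h'', rfl, ?_⟩
    have : (some h).bind (segRemove x) = some h'' := by rw [Option.bind_some, hx]
    rw [this] at hne
    exact hne

lemma rList_append (l₁ l₂ : List Seg) (o : Option (Multiset Seg)) :
    rList (l₁ ++ l₂) o = rList l₂ (rList l₁ o) := by
  induction l₁ generalizing o with
  | nil => rfl
  | cons x l ih => simp [rList, ih]

lemma minStart_le {n : Multiset Seg} {D : Seg} (hD : D ∈ n) : minStart n ≤ segA D := by
  unfold minStart
  have hmem : segA D ∈ (n.map segA).sort (· ≤ ·) := by
    rw [Multiset.mem_sort]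
    exact Multiset.mem_map_of_mem _ hD
  have hsort : ((n.map segA).sort (· ≤ ·)).Pairwise (· ≤ ·) := Multiset.pairwise_sort _ _
  cases hl : (n.map segA).sort (· ≤ ·) with
  | nil => rw [hl] at hmem; simp at hmem
  | cons x l =>
    rw [hl] at hmem hsort
    rcases List.mem_cons.1 hmem with h | h
    · simp [h.symm]
    · have hx : x ≤ segA D := List.rel_of_pairwise_cons hsort h
      simpa using hx

lemma mem_atc {n : Multiset Seg} {D : Seg} {a : ℤ} : D ∈ atc n a ↔ D ∈ n ∧ segA D = a := by
  unfold atc; exact Multiset.mem_filter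

lemma sort_split (n : Multiset Seg) (a : ℤ) (hmin : ∀ D ∈ n, a ≤ segA D) :
    n.sort (· ≤ ·) = (atc n a).sort (· ≤ ·) ++ ((n.filter (fun D => ¬ segA D = a)).sort (· ≤ ·)) := by
  classical
  have hperm : ((atc n a).sort (· ≤ ·) ++ ((n.filter (fun D => ¬ segA D = a)).sort (· ≤ ·))).Perm
      (n.sort (· ≤ ·)) := by
    rw [← Multiset.coe_eq_coe]
    rw [← Multiset.coe_add, Multiset.sort_eq, Multiset.sort_eq, Multiset.sort_eq]
    exact Multiset.filter_add_not _ n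
  have hsorted : ((atc n a).sort (· ≤ ·) ++ ((n.filter (fun D => ¬ segA D = a)).sort (· ≤ ·))).Pairwise (· ≤ ·) := by
    show List.Pairwise _ _
    rw [List.pairwise_append]
    refine ⟨Multiset.pairwise_sort _ _, Multiset.pairwise_sort _ _, ?_⟩
    intro x hx y hy
    rw [Multiset.mem_sort, mem_atc] at hx
    rw [Multiset.mem_sort, Multiset.mem_filter] at hy
    have : a < segA y := lt_of_le_of_ne (hmin y hy.1) (Ne.symm hy.2)
    rw [seg_le_iff]
    left
    omega
  exact (List.Perm.eq_of_pairwise' hsorted (Multiset.pairwise_sort _ _) hperm).symm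

lemma fsList_count (h : Multiset Seg) (a : ℤ) (Δ Δb : Seg) (hΔa : segA Δ = a)
    (h1 : ¬ Subseg Δb Δ) (h2 : Subseg Δb (Upsilon Δ h)) :
    ∀ (L : List Seg) (h' : Multiset Seg),
      (∀ D ∈ L, segA D = a) → rList L (some h') ≠ none →
      (∀ E ∈ h', segA E = a → E ∈ h) →
      ((↑L : Multiset Seg).filter (fun D => Subseg Δb D)).card + (if Δ ∈ L then 1 else 0)
        ≤ ((fsList L h').filter (fun E => Subseg Δb E)).card := by
  intro L
  induction L with
  | nil => intro h' _ _ _; simp [fsList]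
  | cons D rest ih =>
    intro h' hL hne hpres
    obtain ⟨h'', hsr, hrest⟩ := rList_cons_ne hne
    have hDa : segA D = a := hL D (List.mem_cons_self)
    have hadmD : SegAdmissible D h' := by
      by_contra hc
      rw [segRemove, if_neg hc] at hsr
      exact absurd hsr (by simp)
    have hfs : fsList (D :: rest) h' = Upsilon D h' ::ₘ fsList rest h'' := by
      rw [fsList, hsr]
    have hpres'' : ∀ E ∈ h'', segA E = a → E ∈ h := by
      intro E hE hEa
      exact hpres E (segRemove_preserve hsr E hE (by omega)) hEa
    have hIH := ih h'' (fun D' hD' => hL D' (List.mem_cons_of_mem _ hD')) hrest hpres''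
    have specD := upsilon_spec hadmD
    -- claim: if Δb ⊆ D then Δb ⊆ Υ(D, h')
    have hpbD : Subseg Δb D → Subseg Δb (Upsilon D h') := by
      rintro ⟨u1, u2⟩
      obtain ⟨_, s1, s2, _⟩ := specD
      exact ⟨by omega, by omega⟩
    -- claim: if D = Δ then Δb ⊆ Υ(Δ, h')
    have hpbΔ : D = Δ → Subseg Δb (Upsilon D h') := by
      rintro rfl
      obtain ⟨m1, s1, s2, _⟩ := specD
      have hmem : Upsilon D h' ∈ h := hpres _ m1 (by omega)
      have hadmh : SegAdmissible D h := ⟨Upsilon D h', hmem, s1, s2⟩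
      obtain ⟨_, t1, t2, tmin⟩ := upsilon_spec hadmh
      have hle : segB (Upsilon D h) ≤ segB (Upsilon D h') := tmin _ hmem s1 s2
      obtain ⟨u1, u2⟩ := h2
      exact ⟨by omega, by omega⟩
    rw [hfs]
    rw [show ((D :: rest : List Seg) : Multiset Seg) = D ::ₘ (↑rest : Multiset Seg) from rfl,
      Multiset.filter_cons, Multiset.filter_cons, Multiset.card_add, Multiset.card_add]
    by_cases hDΔ : D = Δ
    · subst hDΔ
      rw [if_neg h1, if_pos (hpbΔ rfl), if_pos (List.mem_cons_self)]
      simp only [Multiset.card_zero, Multiset.card_singleton]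
      have hcb := le_trans (Nat.le_add_right _ _) hIH
      omega
    · have hcons : (Δ ∈ D :: rest) ↔ (Δ ∈ rest) := by simp [List.mem_cons, Ne.symm hDΔ]
      by_cases hm : Δ ∈ rest
      · rw [if_pos (hcons.2 hm)]
        rw [if_pos hm] at hIH
        by_cases hpb : Subseg Δb D
        · rw [if_pos hpb, if_pos (hpbD hpb)]
          simp only [Multiset.card_singleton]
          omega
        · rw [if_neg hpb]
          simp only [Multiset.card_zero]
          split_ifs <;> simp only [Multiset.card_singleton, Multiset.card_zero] <;> omega
      · rw [if_neg (fun hh => hm (hcons.1 hh))]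
        rw [if_neg hm] at hIH
        by_cases hpb : Subseg Δb D
        · rw [if_pos hpb, if_pos (hpbD hpb)]
          simp only [Multiset.card_singleton]
          omega
        · rw [if_neg hpb]
          simp only [Multiset.card_zero]
          split_ifs <;> simp only [Multiset.card_singleton, Multiset.card_zero] <;> omega

/-- a one-segment criterion for local minimizability. -/
theorem statement10 (n h : Multiset Seg) (hn : n ≠ 0) (hadm : rM n h ≠ none)
    (Δ Δb : Seg) (hΔ : Δ ∈ atc n (minStart n)) (hΔb : Δb ∈ atc n (minStart n + 1))
    (h1 : ¬ Subseg Δb Δ) (h2 : Subseg Δb (Upsilon Δ h)) :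
    locallyMin n h := by
  classical
  set a := minStart n with ha
  have hmin : ∀ D ∈ n, a ≤ segA D := fun D hD => minStart_le hD
  have hsplit := sort_split n a hmin
  have hatc : rList ((atc n a).sort (· ≤ ·)) (some h) ≠ none := by
    intro hcon
    apply hadm
    show rList (n.sort (· ≤ ·)) (some h) = none
    rw [hsplit, rList_append, hcon]
    exact rList_none _
  have hrm : rM (atc n a) h ≠ none := hatc
  have hfs : fs n h = fsList ((atc n a).sort (· ≤ ·)) h := by
    rw [fs, if_neg hn, if_pos hrm]
  set L := (atc n a).sort (· ≤ ·) with hL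
  have hLa : ∀ D ∈ L, segA D = a := by
    intro D hD
    rw [hL, Multiset.mem_sort, mem_atc] at hD
    exact hD.2
  have hΔa : segA Δ = a := (mem_atc.1 hΔ).2
  have hkey := fsList_count h a Δ Δb hΔa h1 h2 L h hLa hatc (fun E hE _ => hE)
  have hΔL : Δ ∈ L := by rw [hL, Multiset.mem_sort]; exact hΔ
  rw [if_pos hΔL] at hkey
  refine ⟨Δb, hΔb, ?_⟩
  rw [hfs]
  have hcoe : ((↑L : Multiset Seg).filter (fun D => Subseg Δb D)) =
      ((atc n a).filter (fun D => Subseg Δb D)) := by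
    rw [hL, Multiset.sort_eq]
  rw [← hcoe]
  omega
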